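/- For every integer m, the rational function 𝒫_m := 𝒰_m'/𝒰_m satisfies the inhomogeneous Painlevé-II equation with parameter m, namely 𝒫_m'' = 2·𝒫_m³ + (2/3)·y·𝒫_m − (2/3)·m, and the rational function 𝒬_m := 𝒱_m'/𝒱_m satisfies 𝒬_m'' = 2·𝒬_m³ + (2/3)·y·𝒬_m + (2/3)·(m−1), both as identities in ℂ(y). -/

import Mathlib

/-- The derivative on the field `ℂ(y)` of complex rational functions, computed via the
quotient rule applied to the lowest-terms representation `num/denom`. -/
noncomputable def rfD (f : RatFunc ℂ) : RatFunc ℂ :=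
  (algebraMap (Polynomial ℂ) (RatFunc ℂ) (Polynomial.derivative f.num) *
      algebraMap (Polynomial ℂ) (RatFunc ℂ) f.denom -
    algebraMap (Polynomial ℂ) (RatFunc ℂ) f.num *
      algebraMap (Polynomial ℂ) (RatFunc ℂ) (Polynomial.derivative f.denom)) /
    algebraMap (Polynomial ℂ) (RatFunc ℂ) f.denom ^ 2

/-- The pairs `(𝒰_m, 𝒱_m)` for `m = 0, 1, 2, …` via the forward recursion. -/
noncomputable def UVpos : ℕ → RatFunc ℂ × RatFunc ℂ
  | 0 => (1, -RatFunc.X / 6)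
  | n + 1 =>
    (-(1 / 6 : RatFunc ℂ) * RatFunc.X * (UVpos n).1 - rfD (UVpos n).1 ^ 2 / (UVpos n).1 +
        (1 / 2 : RatFunc ℂ) * rfD (rfD (UVpos n).1),
      1 / (UVpos n).1)

/-- The pairs `(𝒰_{-m}, 𝒱_{-m})` for `m = 0, 1, 2, …` via the backward recursion. -/
noncomputable def UVneg : ℕ → RatFunc ℂ × RatFunc ℂ
  | 0 => (1, -RatFunc.X / 6)
  | n + 1 =>
    (1 / (UVneg n).2,
      (1 / 2 : RatFunc ℂ) * rfD (rfD (UVneg n).2) - rfD (UVneg n).2 ^ 2 / (UVneg n).2 -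
        (1 / 6 : RatFunc ℂ) * RatFunc.X * (UVneg n).2)

/-- The rational function `𝒰_m ∈ ℂ(y)`, `m ∈ ℤ`. -/
noncomputable def 𝒰 (m : ℤ) : RatFunc ℂ :=
  if 0 ≤ m then (UVpos m.toNat).1 else (UVneg (-m).toNat).1

/-- The rational function `𝒱_m ∈ ℂ(y)`, `m ∈ ℤ`. -/
noncomputable def 𝒱 (m : ℤ) : RatFunc ℂ :=
  if 0 ≤ m then (UVpos m.toNat).2 else (UVneg (-m).toNat).2


/-- The rational function `𝒫_m := 𝒰_m'/𝒰_m ∈ ℂ(y)`. -/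
noncomputable def Pm (m : ℤ) : RatFunc ℂ := rfD (𝒰 m) / 𝒰 m

/-- The rational function `𝒬_m := 𝒱_m'/𝒱_m ∈ ℂ(y)`. -/
noncomputable def Qm (m : ℤ) : RatFunc ℂ := rfD (𝒱 m) / 𝒱 m

open Polynomial RatFunc

local notation "A" => algebraMap (Polynomial ℂ) (RatFunc ℂ)

lemma rfD_eq_div (p q : Polynomial ℂ) (hq : q ≠ 0) :
    rfD (A p / A q) =
      (A (derivative p) * A q - A p * A (derivative q)) / A q ^ 2 := by
  set f : RatFunc ℂ := A p / A q with hf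
  have hd : f.denom ≠ 0 := f.denom_ne_zero
  have hdA : A f.denom ≠ 0 := RatFunc.algebraMap_ne_zero hd
  have hqA : A q ≠ 0 := RatFunc.algebraMap_ne_zero hq
  have h1 : f.num * q = p * f.denom := by
    apply RatFunc.algebraMap_injective ℂ
    rw [map_mul, map_mul]
    have h : A f.num / A f.denom = A p / A q := by rw [f.num_div_denom]
    rw [div_eq_div_iff hdA hqA] at h
    exact h
  have h2 : derivative f.num * q + f.num * derivative q
      = derivative p * f.denom + p * derivative f.denom := by
    have := congrArg derivative h1
    simpa [derivative_mul] using this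
  have h1' : A f.num * A q = A p * A f.denom := by
    rw [← map_mul, ← map_mul, h1]
  have h2' : A (derivative f.num) * A q + A f.num * A (derivative q)
      = A (derivative p) * A f.denom + A p * A (derivative f.denom) := by
    rw [← map_mul, ← map_mul, ← map_mul, ← map_mul, ← map_add, ← map_add, h2]
  show (A (derivative f.num) * A f.denom - A f.num * A (derivative f.denom)) / A f.denom ^ 2
      = (A (derivative p) * A q - A p * A (derivative q)) / A q ^ 2
  rw [div_eq_div_iff (pow_ne_zero 2 hdA) (pow_ne_zero 2 hqA)]
  linear_combination (A f.denom * A q) * h2' -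
    (A (derivative f.denom) * A q + A (derivative q) * A f.denom) * h1'

lemma rfD_def (f : RatFunc ℂ) : rfD f =
    (A (derivative f.num) * A f.denom - A f.num * A (derivative f.denom)) / A f.denom ^ 2 := rfl

lemma rfD_algebraMap (p : Polynomial ℂ) : rfD (A p) = A (derivative p) := by
  have := rfD_eq_div p 1 one_ne_zero
  simpa using this

lemma rfD_add' (a b c d : Polynomial ℂ) (hb : b ≠ 0) (hd : d ≠ 0) :
    rfD (A a / A b + A c / A d) = rfD (A a / A b) + rfD (A c / A d) := by
  have hb' : A b ≠ 0 := RatFunc.algebraMap_ne_zero hb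
  have hd' : A d ≠ 0 := RatFunc.algebraMap_ne_zero hd
  have key : A a / A b + A c / A d = A (a * d + c * b) / A (b * d) := by
    rw [map_add, map_mul, map_mul, map_mul]
    field_simp
  rw [key, rfD_eq_div _ _ (mul_ne_zero hb hd), rfD_eq_div _ _ hb, rfD_eq_div _ _ hd]
  simp only [derivative_add, derivative_mul, map_add, map_mul]
  field_simp
  ring

lemma rfD_add (f g : RatFunc ℂ) : rfD (f + g) = rfD f + rfD g := by
  rw [← f.num_div_denom, ← g.num_div_denom]
  exact rfD_add' _ _ _ _ f.denom_ne_zero g.denom_ne_zero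

lemma rfD_mul' (a b c d : Polynomial ℂ) (hb : b ≠ 0) (hd : d ≠ 0) :
    rfD (A a / A b * (A c / A d)) =
      rfD (A a / A b) * (A c / A d) + A a / A b * rfD (A c / A d) := by
  have hb' : A b ≠ 0 := RatFunc.algebraMap_ne_zero hb
  have hd' : A d ≠ 0 := RatFunc.algebraMap_ne_zero hd
  have key : A a / A b * (A c / A d) = A (a * c) / A (b * d) := by
    rw [map_mul, map_mul]
    field_simp
  rw [key, rfD_eq_div _ _ (mul_ne_zero hb hd), rfD_eq_div _ _ hb, rfD_eq_div _ _ hd]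
  simp only [derivative_mul, map_add, map_mul]
  field_simp
  ring

lemma rfD_mul (f g : RatFunc ℂ) : rfD (f * g) = rfD f * g + f * rfD g := by
  rw [← f.num_div_denom, ← g.num_div_denom]
  exact rfD_mul' _ _ _ _ f.denom_ne_zero g.denom_ne_zero

lemma rfD_zero : rfD (0 : RatFunc ℂ) = 0 := by
  have := rfD_algebraMap 0
  simpa using this

lemma rfD_one : rfD (1 : RatFunc ℂ) = 0 := by
  have := rfD_algebraMap 1
  simpa using this

lemma rfD_X : rfD (RatFunc.X : RatFunc ℂ) = 1 := by
  have := rfD_algebraMap (Polynomial.X : Polynomial ℂ)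
  simpa [RatFunc.algebraMap_X] using this

lemma rfD_neg (f : RatFunc ℂ) : rfD (-f) = -rfD f := by
  have h := rfD_add f (-f)
  simp only [add_neg_cancel, rfD_zero] at h
  linear_combination -h

lemma rfD_sub (f g : RatFunc ℂ) : rfD (f - g) = rfD f - rfD g := by
  rw [sub_eq_add_neg, rfD_add, rfD_neg, sub_eq_add_neg]

lemma rfD_ofNat (n : ℕ) [n.AtLeastTwo] :
    rfD (OfNat.ofNat n : RatFunc ℂ) = 0 := by
  have := rfD_algebraMap (OfNat.ofNat n : Polynomial ℂ)
  simpa [map_ofNat] using this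

lemma rfD_natCast (n : ℕ) : rfD (n : RatFunc ℂ) = 0 := by
  have := rfD_algebraMap (n : Polynomial ℂ)
  simpa using this

lemma rfD_intCast (n : ℤ) : rfD (n : RatFunc ℂ) = 0 := by
  have := rfD_algebraMap (n : Polynomial ℂ)
  simpa using this

lemma rfD_inv (f : RatFunc ℂ) (hf : f ≠ 0) : rfD f⁻¹ = -rfD f / f ^ 2 := by
  have hn : f.num ≠ 0 := RatFunc.num_ne_zero hf
  have hnA : A f.num ≠ 0 := RatFunc.algebraMap_ne_zero hn
  have hdA : A f.denom ≠ 0 := RatFunc.algebraMap_ne_zero f.denom_ne_zero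
  have hkey : f * A f.denom = A f.num := by
    have h := f.num_div_denom
    rw [div_eq_iff hdA] at h
    linear_combination -h
  rw [← f.num_div_denom, inv_div, rfD_eq_div _ _ hn, rfD_eq_div _ _ f.denom_ne_zero]
  field_simp
  ring

lemma rfD_div (f g : RatFunc ℂ) (hg : g ≠ 0) :
    rfD (f / g) = (rfD f * g - f * rfD g) / g ^ 2 := by
  rw [div_eq_mul_inv, rfD_mul, rfD_inv g hg]
  field_simp
  ring

lemma rfD_sq (f : RatFunc ℂ) : rfD (f ^ 2) = 2 * f * rfD f := by
  rw [sq, rfD_mul]; ring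

lemma rfD_cube (f : RatFunc ℂ) : rfD (f ^ 3) = 3 * f ^ 2 * rfD f := by
  rw [pow_succ, rfD_mul, rfD_sq]; ring

lemma rfD_const_mul (c f : RatFunc ℂ) (hc : rfD c = 0) : rfD (c * f) = c * rfD f := by
  rw [rfD_mul, hc]; ring

instance : CharZero (RatFunc ℂ) :=
  charZero_of_injective_algebraMap (RatFunc.algebraMap_injective ℂ)

lemma K6 : (6 : RatFunc ℂ) ≠ 0 := by norm_num
lemma K2 : (2 : RatFunc ℂ) ≠ 0 := by norm_num
lemma K3 : (3 : RatFunc ℂ) ≠ 0 := by norm_num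

/-- `𝒰_n` for `n ≥ 0`. -/
noncomputable def uu (n : ℕ) : RatFunc ℂ := (UVpos n).1

/-- `𝒫_n` for `n ≥ 0`. -/
noncomputable def PP (n : ℕ) : RatFunc ℂ := rfD (uu n) / uu n

/-- The ratio `𝒰_{n+1}/𝒰_n` as a function of `q = 𝒫_n`. -/
noncomputable def tfun (q : RatFunc ℂ) : RatFunc ℂ :=
  (rfD q - q ^ 2) / 2 - RatFunc.X / 6

lemma uu_zero : uu 0 = 1 := rfl

lemma uu_succ (n : ℕ) : uu (n + 1) =
    -(1 / 6 : RatFunc ℂ) * RatFunc.X * uu n - rfD (uu n) ^ 2 / uu n +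
      (1 / 2 : RatFunc ℂ) * rfD (rfD (uu n)) := rfl

lemma uu_one : uu 1 = -RatFunc.X / 6 := by
  rw [uu_succ, uu_zero, rfD_one, rfD_zero]
  ring

lemma rfD_tfun (q : RatFunc ℂ) :
    rfD (tfun q) = (rfD (rfD q) - 2 * q * rfD q) / 2 - 1 / 6 := by
  rw [tfun, rfD_sub, rfD_div _ _ K2, rfD_div _ _ K6,
    rfD_sub, rfD_sq, rfD_X, rfD_ofNat, rfD_ofNat]
  field_simp
  ring

lemma rfD_uu (n : ℕ) (hu : uu n ≠ 0) : rfD (uu n) = PP n * uu n := by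
  rw [PP]; field_simp

lemma uu_succ_eq (n : ℕ) (hu : uu n ≠ 0) : uu (n + 1) = uu n * tfun (PP n) := by
  have h1 : rfD (uu n) = PP n * uu n := rfD_uu n hu
  have h2 : rfD (rfD (uu n)) = (rfD (PP n) + PP n ^ 2) * uu n := by
    rw [h1, rfD_mul, h1]; ring
  rw [uu_succ, h2, h1, tfun]
  field_simp
  ring

/-- log-derivative of a product -/
lemma logd_mul (a b : RatFunc ℂ) (ha : a ≠ 0) (hb : b ≠ 0) :
    rfD (a * b) / (a * b) = rfD a / a + rfD b / b := by
  rw [rfD_mul]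
  field_simp

/-- derivative of a quotient, log form -/
lemma rfD_ratio (a b : RatFunc ℂ) (ha : a ≠ 0) (hb : b ≠ 0) :
    rfD (a / b) = (a / b) * (rfD a / a - rfD b / b) := by
  rw [rfD_div _ _ hb]
  field_simp

/-- The inductive invariant along the forward chain. -/
def Sinv (n : ℕ) : Prop :=
  uu n ≠ 0 ∧ uu (n + 1) ≠ 0 ∧
    rfD (PP (n + 1)) + PP (n + 1) ^ 2 + RatFunc.X / 3 + 2 * (uu (n + 1) / uu n) = 0 ∧
    (uu (n + 1) / uu n) * (PP n + PP (n + 1)) + (2 * (n : RatFunc ℂ) + 1) / 6 = 0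

lemma PP_zero : PP 0 = 0 := by
  rw [PP, uu_zero, rfD_one]; simp

lemma uu_one_ne : uu 1 ≠ 0 := by
  rw [uu_one]
  intro hc
  apply RatFunc.X_ne_zero (K := ℂ)
  field_simp at hc
  linear_combination -hc

lemma PP_one : PP 1 = 1 / RatFunc.X := by
  have h : rfD (uu 1) = -(1 / 6 : RatFunc ℂ) := by
    rw [uu_one, rfD_div _ _ K6, rfD_neg, rfD_X, rfD_ofNat]
    norm_num
  rw [PP, h, uu_one]
  rw [div_eq_div_iff (by rw [← uu_one]; exact uu_one_ne) (RatFunc.X_ne_zero (K := ℂ))]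
  ring

lemma Sinv_zero : Sinv 0 := by
  refine ⟨by rw [uu_zero]; exact one_ne_zero, uu_one_ne, ?_, ?_⟩
  · rw [PP_one, uu_one, uu_zero, rfD_div _ _ RatFunc.X_ne_zero, rfD_one, rfD_X]
    field_simp
    ring
  · have hX : (RatFunc.X : RatFunc ℂ) ≠ 0 := RatFunc.X_ne_zero
    rw [PP_zero, PP_one, uu_one, uu_zero, div_one, zero_add]
    push_cast
    field_simp
    ring

lemma rfD_two : rfD (2 : RatFunc ℂ) = 0 := by
  rw [show (2 : RatFunc ℂ) = ((2 : ℕ) : RatFunc ℂ) by norm_num, rfD_natCast]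

lemma rfD_three : rfD (3 : RatFunc ℂ) = 0 := by
  rw [show (3 : RatFunc ℂ) = ((3 : ℕ) : RatFunc ℂ) by norm_num, rfD_natCast]

lemma rfD_six : rfD (6 : RatFunc ℂ) = 0 := by
  rw [show (6 : RatFunc ℂ) = ((6 : ℕ) : RatFunc ℂ) by norm_num, rfD_natCast]

lemma rfD_c23 : rfD ((2 : RatFunc ℂ) / 3) = 0 := by
  rw [rfD_div _ _ K3, rfD_ofNat, rfD_ofNat]
  norm_num

lemma PII_succ (n : ℕ) (h : Sinv n) :
    rfD (rfD (PP (n + 1))) =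
      2 * PP (n + 1) ^ 3 + (2 / 3 : RatFunc ℂ) * RatFunc.X * PP (n + 1) -
        (2 / 3 : RatFunc ℂ) * ((n : RatFunc ℂ) + 1) := by
  obtain ⟨hu0, hu1, hB, hC⟩ := h
  have hσ : rfD (uu (n + 1) / uu n) =
      (uu (n + 1) / uu n) * (PP (n + 1) - PP n) := by
    rw [rfD_ratio _ _ hu1 hu0, PP, PP]
  have hBq : rfD (PP (n + 1)) =
      -(PP (n + 1) ^ 2) - RatFunc.X / 3 - 2 * (uu (n + 1) / uu n) := by
    linear_combination hB
  have hB' := congrArg rfD hBq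
  rw [rfD_sub, rfD_sub, rfD_neg, rfD_sq, rfD_div _ _ K3, rfD_X, rfD_ofNat,
    rfD_const_mul _ _ (rfD_ofNat 2), hσ] at hB'
  linear_combination hB' - 2 * PP (n + 1) * hBq + 2 * hC

lemma Sinv_step (n : ℕ) (h : Sinv n) : Sinv (n + 1) := by
  obtain ⟨hu0, hu1, hB, hC⟩ := h
  have hq'' := PII_succ n ⟨hu0, hu1, hB, hC⟩
  have hA : uu (n + 1 + 1) = uu (n + 1) * tfun (PP (n + 1)) := uu_succ_eq (n + 1) hu1
  have hτ' : rfD (tfun (PP (n + 1))) =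
      PP (n + 1) ^ 3 + RatFunc.X * PP (n + 1) / 3 - ((n : RatFunc ℂ) + 1) / 3 -
        PP (n + 1) * rfD (PP (n + 1)) - 1 / 6 := by
    rw [rfD_tfun, hq'']
    ring
  have hE : 2 * PP (n + 1) * tfun (PP (n + 1)) + rfD (tfun (PP (n + 1))) +
      (2 * (n : RatFunc ℂ) + 3) / 6 = 0 := by
    rw [hτ', tfun]
    ring
  have hτ0 : tfun (PP (n + 1)) ≠ 0 := by
    intro h0
    rw [h0, rfD_zero, mul_zero, zero_add, zero_add] at hE
    have h1 : (2 * (n : RatFunc ℂ) + 3) = 0 := by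
      field_simp at hE
      linear_combination hE
    have h23 : ((2 * n + 3 : ℕ) : RatFunc ℂ) ≠ 0 := Nat.cast_ne_zero.mpr (by omega)
    apply h23
    push_cast
    linear_combination h1
  have hu2 : uu (n + 1 + 1) ≠ 0 := by
    rw [hA]; exact mul_ne_zero hu1 hτ0
  have hratio : uu (n + 1 + 1) / uu (n + 1) = tfun (PP (n + 1)) := by
    rw [hA]; field_simp
  have hr : PP (n + 1 + 1) = PP (n + 1) + rfD (tfun (PP (n + 1))) / tfun (PP (n + 1)) := by
    rw [PP, hA, logd_mul _ _ hu1 hτ0, PP]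
  -- second derivative of tfun from differentiating hE
  have hc0 : rfD ((2 * (n : RatFunc ℂ) + 3) / 6) = 0 := by
    rw [rfD_div _ _ K6]
    simp only [rfD_add, rfD_mul, rfD_two, rfD_three, rfD_six, rfD_natCast]
    ring
  have hE' := congrArg rfD hE
  rw [rfD_add, rfD_add, rfD_mul, rfD_mul, rfD_ofNat, rfD_zero, hc0] at hE'
  have hτ'' : rfD (rfD (tfun (PP (n + 1)))) =
      -(2 * rfD (PP (n + 1)) * tfun (PP (n + 1))) -
        2 * PP (n + 1) * rfD (tfun (PP (n + 1))) := by
    linear_combination hE'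
  have hrt : (PP (n + 1 + 1) - PP (n + 1)) * tfun (PP (n + 1)) = rfD (tfun (PP (n + 1))) := by
    rw [hr]
    field_simp
    ring
  have hrt' := congrArg rfD hrt
  rw [rfD_mul, rfD_sub] at hrt'
  have hteq : tfun (PP (n + 1)) =
      (rfD (PP (n + 1)) - PP (n + 1) ^ 2) / 2 - RatFunc.X / 6 := rfl
  refine ⟨hu1, hu2, ?_, ?_⟩
  · have hT : (rfD (PP (n + 1 + 1)) + PP (n + 1 + 1) ^ 2 + RatFunc.X / 3 +
        2 * tfun (PP (n + 1))) * tfun (PP (n + 1)) = 0 := by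
      linear_combination (PP (n + 1) + PP (n + 1 + 1)) * hrt + hrt' + hτ'' +
        2 * tfun (PP (n + 1)) * hteq
    rw [hratio]
    rcases mul_eq_zero.mp hT with h | h
    · exact h
    · exact absurd h hτ0
  · rw [hratio]
    push_cast
    linear_combination hE + hrt

lemma Sinv_all (n : ℕ) : Sinv n := by
  induction n with
  | zero => exact Sinv_zero
  | succ k ih => exact Sinv_step k ih

lemma uu_ne (n : ℕ) : uu n ≠ 0 := (Sinv_all n).1

lemma PII_zero : rfD (rfD (PP 0)) =
    2 * PP 0 ^ 3 + (2 / 3 : RatFunc ℂ) * RatFunc.X * PP 0 -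
      (2 / 3 : RatFunc ℂ) * ((0 : ℕ) : RatFunc ℂ) := by
  rw [PP_zero, rfD_zero, rfD_zero]
  norm_num

lemma PII_nat (n : ℕ) : rfD (rfD (PP n)) =
    2 * PP n ^ 3 + (2 / 3 : RatFunc ℂ) * RatFunc.X * PP n -
      (2 / 3 : RatFunc ℂ) * ((n : ℕ) : RatFunc ℂ) := by
  cases n with
  | zero => exact PII_zero
  | succ k =>
    have := PII_succ k (Sinv_all k)
    push_cast at this ⊢
    linear_combination this

lemma logd_inv (f : RatFunc ℂ) (hf : f ≠ 0) :
    rfD (1 / f) / (1 / f) = -(rfD f / f) := by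
  rw [one_div, rfD_inv _ hf]
  field_simp

lemma UVneg_eq (n : ℕ) : (UVneg n).1 = 1 / uu n ∧ (UVneg n).2 = uu (n + 1) := by
  induction n with
  | zero =>
    constructor
    · show (1 : RatFunc ℂ) = 1 / uu 0
      rw [uu_zero]
      norm_num
    · show (-RatFunc.X / 6 : RatFunc ℂ) = uu 1
      rw [uu_one]
  | succ k ih =>
    constructor
    · show 1 / (UVneg k).2 = 1 / uu (k + 1)
      rw [ih.2]
    · show (1 / 2 : RatFunc ℂ) * rfD (rfD (UVneg k).2) - rfD (UVneg k).2 ^ 2 / (UVneg k).2 -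
          (1 / 6 : RatFunc ℂ) * RatFunc.X * (UVneg k).2 = uu (k + 1 + 1)
      rw [ih.2, uu_succ (k + 1)]
      ring

theorem rational_PII' (m : ℤ) :
    rfD (rfD (Pm m)) =
      2 * Pm m ^ 3 + (2 / 3 : RatFunc ℂ) * RatFunc.X * Pm m -
        (2 / 3 : RatFunc ℂ) * (m : RatFunc ℂ) ∧
    rfD (rfD (Qm m)) =
      2 * Qm m ^ 3 + (2 / 3 : RatFunc ℂ) * RatFunc.X * Qm m +
        (2 / 3 : RatFunc ℂ) * ((m : RatFunc ℂ) - 1) := by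
  constructor
  · rcases le_or_gt 0 m with hm | hm
    · have h𝒰 : 𝒰 m = uu m.toNat := by simp only [𝒰, if_pos hm]; rfl
      have hP : Pm m = PP m.toNat := by rw [Pm, h𝒰]; rfl
      have hz : ((m.toNat : ℕ) : ℤ) = m := Int.toNat_of_nonneg hm
      have hcast : ((m.toNat : ℕ) : RatFunc ℂ) = (m : RatFunc ℂ) := by
        have := congrArg (fun z : ℤ => (z : RatFunc ℂ)) hz
        push_cast at this
        exact this
      rw [hP, ← hcast]
      exact PII_nat m.toNat
    · have h𝒰 : 𝒰 m = 1 / uu (-m).toNat := by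
        simp only [𝒰, if_neg (not_le.mpr hm)]
        rw [(UVneg_eq (-m).toNat).1]
      have hP : Pm m = -(PP (-m).toNat) := by
        rw [Pm, h𝒰, logd_inv _ (uu_ne (-m).toNat)]
        rfl
      have hpk := PII_nat (-m).toNat
      have hz : (((-m).toNat : ℕ) : ℤ) = -m := Int.toNat_of_nonneg (by omega)
      have hcast : (((-m).toNat : ℕ) : RatFunc ℂ) = -(m : RatFunc ℂ) := by
        have := congrArg (fun z : ℤ => (z : RatFunc ℂ)) hz
        push_cast at this
        exact this
      rw [hP, rfD_neg, rfD_neg]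
      linear_combination -hpk + (2 / 3 : RatFunc ℂ) * hcast
  · rcases le_or_gt 0 m with hm | hm
    · have h𝒱 : 𝒱 m = (UVpos m.toNat).2 := by simp only [𝒱, if_pos hm]
      cases hn : m.toNat with
      | zero =>
        have hm0 : m = 0 := by omega
        have h2 : 𝒱 m = uu 1 := by
          rw [h𝒱, hn]
          show (-RatFunc.X / 6 : RatFunc ℂ) = uu 1
          rw [uu_one]
        have hQ : Qm m = PP 1 := by rw [Qm, h2]; rfl
        subst hm0
        rw [hQ, PII_nat 1]
        push_cast
        ring
      | succ k =>
        have h2 : 𝒱 m = 1 / uu k := by rw [h𝒱, hn]; rfl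
        have hQ : Qm m = -(PP k) := by
          rw [Qm, h2, logd_inv _ (uu_ne k)]
          rfl
        have hpk := PII_nat k
        have hz : ((k : ℕ) : ℤ) = m - 1 := by omega
        have hcast : ((k : ℕ) : RatFunc ℂ) = (m : RatFunc ℂ) - 1 := by
          have := congrArg (fun z : ℤ => (z : RatFunc ℂ)) hz
          push_cast at this
          exact this
        rw [hQ, rfD_neg, rfD_neg]
        linear_combination -hpk + (2 / 3 : RatFunc ℂ) * hcast
    · have h𝒱 : 𝒱 m = uu ((-m).toNat + 1) := by
        simp only [𝒱, if_neg (not_le.mpr hm)]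
        rw [(UVneg_eq (-m).toNat).2]
      have hQ : Qm m = PP ((-m).toNat + 1) := by rw [Qm, h𝒱]; rfl
      have hpk := PII_nat ((-m).toNat + 1)
      have hz : (((-m).toNat + 1 : ℕ) : ℤ) = 1 - m := by omega
      have hcast : (((-m).toNat + 1 : ℕ) : RatFunc ℂ) = 1 - (m : RatFunc ℂ) := by
        have := congrArg (fun z : ℤ => (z : RatFunc ℂ)) hz
        push_cast at this
        exact this
      rw [hQ]
      linear_combination hpk - (2 / 3 : RatFunc ℂ) * hcast

/-- For every integer `m`, `𝒫_m = 𝒰_m'/𝒰_m` satisfies the inhomogeneous Painlevé-II equation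
`𝒫_m'' = 2𝒫_m³ + (2/3)y𝒫_m − (2/3)m` with parameter `m`, and `𝒬_m = 𝒱_m'/𝒱_m` satisfies
`𝒬_m'' = 2𝒬_m³ + (2/3)y𝒬_m + (2/3)(m−1)`, as identities in `ℂ(y)`. -/
theorem rational_PII (m : ℤ) :
    rfD (rfD (Pm m)) =
      2 * Pm m ^ 3 + (2 / 3 : RatFunc ℂ) * RatFunc.X * Pm m -
        (2 / 3 : RatFunc ℂ) * (m : RatFunc ℂ) ∧
    rfD (rfD (Qm m)) =
      2 * Qm m ^ 3 + (2 / 3 : RatFunc ℂ) * RatFunc.X * Qm m +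
        (2 / 3 : RatFunc ℂ) * ((m : RatFunc ℂ) - 1) := by
  exact rational_PII' m
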